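/- Let y : (0,a) → ℝ satisfy y''(r) = r·e^{y(r)}/y'(r) with y' > 0, y → +∞ and y' → +∞ as r → a⁻, and suppose e^{y}/y'^3 → 1/(3a) as r → a⁻. Then the limit lim_{r→a⁻} (y'(r)³ − 3r·e^{y(r)}) is not a finite real number. -/

import Mathlib

open Real Set Filter Topology

theorem calabi_no_finite_limit
    (a : ℝ) (ha : 0 < a) (y y' y'' : ℝ → ℝ)
    (hy' : ∀ r ∈ Ioo (0:ℝ) a, HasDerivAt y (y' r) r)
    (hy'' : ∀ r ∈ Ioo (0:ℝ) a, HasDerivAt y' (y'' r) r)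
    (hy'pos : ∀ r ∈ Ioo (0:ℝ) a, 0 < y' r)
    (hode : ∀ r ∈ Ioo (0:ℝ) a, y'' r = r * Real.exp (y r) / y' r)
    (hy_top : Tendsto y (𝓝[<] a) atTop)
    (hy'_top : Tendsto y' (𝓝[<] a) atTop)
    (hlim : Tendsto (fun r => Real.exp (y r) / (y' r) ^ 3) (𝓝[<] a) (𝓝 (1 / (3 * a)))) :
    ¬ ∃ c : ℝ, Tendsto (fun r => (y' r) ^ 3 - 3 * r * Real.exp (y r)) (𝓝[<] a) (𝓝 c) := by
  rintro ⟨c, hc⟩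
  set F : ℝ → ℝ := fun r => (y' r) ^ 3 - 3 * r * Real.exp (y r) with hFdef
  set H : ℝ → ℝ := fun r => Real.exp (y r) / y' r with hHdef
  set G : ℝ → ℝ := fun r => F r + H r with hGdef
  -- G has negative derivative on Ioo 0 a
  have hGderiv : ∀ r ∈ Ioo (0:ℝ) a, HasDerivAt G
      (Real.exp (y r) * (-2 - r * Real.exp (y r) / (y' r) ^ 3)) r := by
    intro r hr
    have hy'r := hy' r hr
    have hy''r := hy'' r hr
    have hpos := hy'pos r hr
    have hne : y' r ≠ 0 := ne_of_gt hpos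
    have hFd : HasDerivAt F (3 * (y' r) ^ 2 * y'' r -
        (3 * Real.exp (y r) + 3 * r * (Real.exp (y r) * y' r))) r := by
      have h1 : HasDerivAt (fun s => (y' s) ^ 3) (3 * (y' r) ^ 2 * y'' r) r := by
        have := hy''r.pow 3
        norm_num at this
        exact this
      have h2 : HasDerivAt (fun s => 3 * s * Real.exp (y s))
          (3 * Real.exp (y r) + 3 * r * (Real.exp (y r) * y' r)) r := by
        have h3 : HasDerivAt (fun s : ℝ => 3 * s) 3 r := by
          simpa using (hasDerivAt_id r).const_mul (3:ℝ)
        have := h3.mul hy'r.exp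
        exact this
      exact h1.sub h2
    have hHd : HasDerivAt H
        ((Real.exp (y r) * y' r * y' r - Real.exp (y r) * y'' r) / (y' r) ^ 2) r :=
      (hy'r.exp).div hy''r hne
    have hsum := hFd.add hHd
    refine hsum.congr_deriv ?_
    rw [hode r hr]
    field_simp
    ring
  -- G is strictly antitone on Ioo 0 a
  have hGanti : StrictAntiOn G (Ioo 0 a) := by
    apply strictAntiOn_of_deriv_neg (convex_Ioo 0 a)
    · intro r hr
      exact ((hGderiv r hr).continuousAt).continuousWithinAt
    · intro r hr
      rw [interior_Ioo] at hr
      rw [(hGderiv r hr).deriv]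
      have h1 : 0 < Real.exp (y r) := Real.exp_pos _
      have h2 : 0 < r * Real.exp (y r) / (y' r) ^ 3 := by
        have := hy'pos r hr
        have := hr.1
        positivity
      nlinarith
  -- H tends to atTop
  have hmem : Ioo (0:ℝ) a ∈ 𝓝[<] a := Ioo_mem_nhdsLT_of_mem ⟨ha, le_rfl⟩
  have hHtop : Tendsto H (𝓝[<] a) atTop := by
    have hsq : Tendsto (fun r => (y' r) ^ 2) (𝓝[<] a) atTop := by
      apply tendsto_atTop_mono' _ _ hy'_top
      filter_upwards [hy'_top.eventually_ge_atTop 1] with r hr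
      nlinarith
    have hpos : (0:ℝ) < 1 / (3 * a) := by positivity
    have hmul : Tendsto (fun r => Real.exp (y r) / (y' r) ^ 3 * (y' r) ^ 2)
        (𝓝[<] a) atTop := Tendsto.pos_mul_atTop hpos hlim hsq
    apply hmul.congr'
    filter_upwards [hmem] with r hr
    have hne : y' r ≠ 0 := ne_of_gt (hy'pos r hr)
    simp only [hHdef]
    field_simp [hHdef]
  -- hence G tends to atTop
  have hGtop : Tendsto G (𝓝[<] a) atTop := hc.add_atTop hHtop
  -- but G is bounded above by G (a/2) on Ioo (a/2) a, contradiction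
  have hhalf : a / 2 ∈ Ioo (0:ℝ) a := ⟨by linarith, by linarith⟩
  have hmem2 : Ioo (a/2) a ∈ 𝓝[<] a := Ioo_mem_nhdsLT_of_mem ⟨by linarith, le_rfl⟩
  have hev := (hGtop.eventually_gt_atTop (G (a/2))).and hmem2
  obtain ⟨r, hr1, hr2⟩ := hev.exists
  have : G r < G (a/2) := hGanti hhalf ⟨by linarith [hr2.1], hr2.2⟩ hr2.1
  linarith
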